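/- There exists a tetrahedron T in ℝ³ and an interior point c of T such that exactly one vertex of T is an equilibrium point with respect to c. -/

import Mathlib

open scoped RealInnerProductSpace

noncomputable section

abbrev E3 := EuclideanSpace ℝ (Fin 3)

/-- Vertex `q` of the convex body `T` is an equilibrium point with respect to `c`:
the plane through `q` perpendicular to `q - c` supports `T` at `q`. -/
def IsVertexEquil (T : Set E3) (c q : E3) : Prop :=
  ∀ x ∈ T, ⟪x - q, q - c⟫ ≤ 0

namespace OneUnstable

/-- The vertices of our tetrahedron. -/
def pp : Fin 4 → E3 := fun i =>
  (WithLp.equiv 2 (Fin 3 → ℝ)).symm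
    (![![1000000, 0, 0], ![1000, 10000, 0], ![-500, 100, 10], ![-10, -30, -1]] i)

lemma pp_apply (i : Fin 4) (j : Fin 3) :
    pp i j = (![![1000000, 0, 0], ![1000, 10000, 0], ![-500, 100, 10], ![-10, -30, -1]] : Fin 4 → Fin 3 → ℝ) i j := rfl

lemma vec3_two (a b c : ℝ) : ![a, b, c] 2 = c := rfl

lemma inner_pp (i k : Fin 4) :
    ⟪pp i, pp k⟫ = pp i 0 * pp k 0 + pp i 1 * pp k 1 + pp i 2 * pp k 2 := by
  simp [PiLp.inner_apply, RCLike.inner_apply, Fin.sum_univ_three, mul_comm]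

lemma ppind : AffineIndependent ℝ pp := by
  rw [affineIndependent_iff_of_fintype]
  intro w hw hvs
  rw [Finset.univ.weightedVSub_eq_linear_combination hw] at hvs
  have h0 := congrArg (fun v : E3 => v 0) hvs
  have h1 := congrArg (fun v : E3 => v 1) hvs
  have h2 := congrArg (fun v : E3 => v 2) hvs
  simp only [Fin.sum_univ_four, PiLp.add_apply, PiLp.smul_apply, smul_eq_mul, pp_apply,
    PiLp.zero_apply] at h0 h1 h2
  rw [Fin.sum_univ_four] at hw
  norm_num [Matrix.cons_val_zero, Matrix.cons_val_one, Matrix.head_cons, Matrix.cons_val_two, Matrix.cons_val_three, Matrix.tail_cons, Matrix.head_cons] at h0 h1 h2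
  intro i
  fin_cases i <;> simp <;> linarith

end OneUnstable

/-- There is an (inhomogeneous) tetrahedron with an interior reference point with
respect to which exactly one vertex is an equilibrium point. -/
theorem exists_tetrahedron_one_unstable :
    ∃ (p : Fin 4 → E3) (c : E3), AffineIndependent ℝ p ∧
      c ∈ interior (convexHull ℝ (Set.range p)) ∧
      ∃! i : Fin 4, IsVertexEquil (convexHull ℝ (Set.range p)) c (p i) := by
  classical
  refine ⟨OneUnstable.pp, 0, OneUnstable.ppind, ?_, ?_⟩
  · -- `0` is interior to the tetrahedron
    have htop : affineSpan ℝ (Set.range OneUnstable.pp) = ⊤ :=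
      OneUnstable.ppind.affineSpan_eq_top_iff_card_eq_finrank_add_one.2 (by simp)
    let b : AffineBasis (Fin 4) ℝ E3 := ⟨OneUnstable.pp, OneUnstable.ppind, htop⟩
    have hrange : Set.range OneUnstable.pp = Set.range (b : Fin 4 → E3) := rfl
    rw [hrange, b.interior_convexHull]
    set w : Fin 4 → ℝ := ![29/551029, 1000/551029, 50000/551029, 500000/551029] with hwdef
    have hw1 : Finset.univ.sum w = 1 := by
      simp only [hwdef, Fin.sum_univ_four, Matrix.cons_val_zero, Matrix.cons_val_one,
        Matrix.head_cons, Matrix.cons_val_two, Matrix.cons_val_three, Matrix.tail_cons, Matrix.head_cons]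
      norm_num
    have hcomb : Finset.univ.affineCombination ℝ (b : Fin 4 → E3) w = 0 := by
      rw [Finset.univ.affineCombination_eq_linear_combination _ _ hw1]
      refine PiLp.ext fun j => ?_
      have hb : (b : Fin 4 → E3) = OneUnstable.pp := rfl
      simp only [hb, Fin.sum_univ_four, PiLp.add_apply, PiLp.smul_apply, smul_eq_mul,
        OneUnstable.pp_apply, PiLp.zero_apply, hwdef]
      fin_cases j <;> norm_num [Matrix.cons_val_two, Matrix.cons_val_three, Matrix.tail_cons, Matrix.head_cons]
    intro i
    rw [← hcomb, b.coord_apply_combination_of_mem (Finset.mem_univ i) hw1]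
    fin_cases i <;> norm_num [hwdef]
  · -- exactly the vertex `pp 0` is an equilibrium point
    have hball : ∀ x ∈ convexHull ℝ (Set.range OneUnstable.pp),
        ⟪x, OneUnstable.pp 0⟫ ≤ ⟪OneUnstable.pp 0, OneUnstable.pp 0⟫ := by
      intro x hx
      have hlin : IsLinearMap ℝ (fun y : E3 => ⟪y, OneUnstable.pp 0⟫) :=
        ⟨fun a b => inner_add_left _ _ _, fun r a => real_inner_smul_left _ _ _⟩
      refine convexHull_min ?_ (convex_halfSpace_le hlin (⟪OneUnstable.pp 0, OneUnstable.pp 0⟫)) hx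
      rintro _ ⟨i, rfl⟩
      fin_cases i <;>
        simp only [Set.mem_setOf_eq, OneUnstable.inner_pp, OneUnstable.pp_apply, Matrix.cons_val_two, Matrix.cons_val_three, Matrix.tail_cons, Matrix.head_cons, OneUnstable.vec3_two] <;> norm_num [Matrix.cons_val_two, Matrix.cons_val_three, Matrix.tail_cons, Matrix.head_cons, OneUnstable.vec3_two]
    refine ⟨0, ?_, ?_⟩
    · intro x hx
      rw [sub_zero, inner_sub_left, sub_nonpos]
      exact hball x hx
    · intro i hi
      have hmem : ∀ k : Fin 4, OneUnstable.pp k ∈ convexHull ℝ (Set.range OneUnstable.pp) :=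
        fun k => subset_convexHull ℝ _ ⟨k, rfl⟩
      fin_cases i
      · rfl
      · exfalso
        have h := hi (OneUnstable.pp 0) (hmem 0)
        rw [sub_zero, inner_sub_left, OneUnstable.inner_pp, OneUnstable.inner_pp] at h
        simp only [OneUnstable.pp_apply, Matrix.cons_val_two, Matrix.cons_val_three, Matrix.tail_cons, Matrix.head_cons, OneUnstable.vec3_two] at h
        norm_num [Matrix.cons_val_two, Matrix.cons_val_three, Matrix.tail_cons, Matrix.head_cons, OneUnstable.vec3_two] at h
      · exfalso
        have h := hi (OneUnstable.pp 1) (hmem 1)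
        rw [sub_zero, inner_sub_left, OneUnstable.inner_pp, OneUnstable.inner_pp] at h
        simp only [OneUnstable.pp_apply, Matrix.cons_val_two, Matrix.cons_val_three, Matrix.tail_cons, Matrix.head_cons, OneUnstable.vec3_two] at h
        norm_num [Matrix.cons_val_two, Matrix.cons_val_three, Matrix.tail_cons, Matrix.head_cons, OneUnstable.vec3_two] at h
      · exfalso
        have h := hi (OneUnstable.pp 2) (hmem 2)
        rw [sub_zero, inner_sub_left, OneUnstable.inner_pp, OneUnstable.inner_pp] at h
        simp only [OneUnstable.pp_apply, Matrix.cons_val_two, Matrix.cons_val_three, Matrix.tail_cons, Matrix.head_cons, OneUnstable.vec3_two] at h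
        norm_num [Matrix.cons_val_two, Matrix.cons_val_three, Matrix.tail_cons, Matrix.head_cons, OneUnstable.vec3_two] at h
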